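/- arXiv:1805.07403 — 2 statements merged into one kernel-verified Lean document; each statement's English description precedes it below -/
import Mathlib

section
/- As T → ∞, the normalized SABR martingale defect satisfies the asymptotic expansion d(T) = 1 - e^{-2γ} - (8√γ / √(ν⁶T³)) e^{-(γ + ν²T/8)} K_0(γ) (1 + O(T^{-1/2})), where γ = ρα/ν > 0 and K_0 is the modified Bessel function of the second kind of order 0. -/
open MeasureTheory ProbabilityTheory Filter Set
open scoped ENNReal NNReal

noncomputable section

/-- Standard Brownian motion with respect to a measure `μ`. -/
structure IsBrownianMotion {Ω : Type*} {mΩ : MeasurableSpace Ω} (μ : Measure Ω)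
    (W : ℝ → Ω → ℝ) : Prop where
  meas : ∀ t, Measurable (W t)
  init : ∀ᵐ ω ∂μ, W 0 ω = 0
  cont : ∀ᵐ ω ∂μ, Continuous fun t => W t ω
  incr : ∀ s t : ℝ, 0 ≤ s → s ≤ t →
    μ.map (fun ω => W t ω - W s ω) = gaussianReal 0 (Real.toNNReal (t - s))
  indep : ∀ n : ℕ, ∀ u : ℕ → ℝ, Monotone u → (∀ i, 0 ≤ u i) →
    iIndepFun
      (fun i : Fin n => fun ω => W (u (i + 1)) ω - W (u i) ω) μ

/-- Riemann sum along dyadic partitions approximating the Itô integral `∫_0^t H dW`. -/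
def itoSum {Ω : Type*} (H W : ℝ → Ω → ℝ) (t : ℝ) (n : ℕ) (ω : Ω) : ℝ :=
  ∑ k ∈ Finset.range (2 ^ n),
    H (t * k / 2 ^ n) ω * (W (t * (k + 1) / 2 ^ n) ω - W (t * k / 2 ^ n) ω)

/-- `I` is the Itô integral process `∫_0^t H dW`: the dyadic Riemann sums converge in
probability to `I t` for every `t ≥ 0`. -/
def IsItoIntegral {Ω : Type*} {mΩ : MeasurableSpace Ω} (μ : Measure Ω)
    (H W I : ℝ → Ω → ℝ) : Prop :=
  ∀ t : ℝ, 0 ≤ t → TendstoInMeasure μ (fun n => itoSum H W t n) atTop (I t)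

/-- `X` solves the SDE `dX_t = b(X_t) dt + σ(X_t) dW_t`, `X_0 = x₀`. -/
def SolvesSDE {Ω : Type*} {mΩ : MeasurableSpace Ω} (μ : Measure Ω)
    (W X : ℝ → Ω → ℝ) (b σ : ℝ → ℝ) (x₀ : ℝ) : Prop :=
  (∀ᵐ ω ∂μ, X 0 ω = x₀) ∧
  ∃ I : ℝ → Ω → ℝ, IsItoIntegral μ (fun t ω => σ (X t ω)) W I ∧
    ∀ t : ℝ, 0 ≤ t → ∀ᵐ ω ∂μ, X t ω = x₀ + (∫ s in (0:ℝ)..t, b (X s ω)) + I t ω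

/-- A process is a local martingale if there is a localizing sequence of stopping times. -/
def IsLocalMartingale {Ω : Type*} {mΩ : MeasurableSpace Ω} (μ : Measure Ω)
    (ℱ : Filtration ℝ mΩ) (X : ℝ → Ω → ℝ) : Prop :=
  ∃ τ : ℕ → Ω → ℝ, (∀ n, IsStoppingTime ℱ (fun ω => ((τ n ω : ℝ) : WithTop ℝ))) ∧
    (∀ᵐ ω ∂μ, Tendsto (fun n => τ n ω) atTop atTop) ∧
    ∀ n, Martingale (MeasureTheory.stoppedProcess X (fun ω => ((τ n ω : ℝ) : WithTop ℝ))) ℱ μ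

/-- A process is a (true) martingale on the time interval `[0, T₀]`. -/
def MartingaleOn {Ω : Type*} {mΩ : MeasurableSpace Ω} (μ : Measure Ω)
    (ℱ : Filtration ℝ mΩ) (X : ℝ → Ω → ℝ) (T₀ : ℝ) : Prop :=
  Adapted ℱ X ∧ (∀ t ∈ Set.Icc (0:ℝ) T₀, Integrable (X t) μ) ∧
  ∀ s t : ℝ, 0 ≤ s → s ≤ t → t ≤ T₀ → μ[X t | ℱ s] =ᵐ[μ] X s

/-- The cumulative distribution function of the standard normal distribution. -/
def stdNormalCDF (z : ℝ) : ℝ := ∫ x in Set.Iic z, gaussianPDFReal 0 1 x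

/-- The modified Bessel function of the second kind of imaginary order `iμ`,
via its real integral representation `K_{iμ}(γ) = ∫_0^∞ e^{-γ cosh t} cos(μ t) dt`. -/
def besselKi (m γ : ℝ) : ℝ :=
  ∫ t in Set.Ioi (0:ℝ), Real.exp (-γ * Real.cosh t) * Real.cos (m * t)

/-- The modified Bessel function of the first kind of real order `l`. -/
def besselI (l x : ℝ) : ℝ :=
  ∑' n : ℕ, (x / 2) ^ (2 * n) * (x / 2) ^ l / (n.factorial * Real.Gamma (n + l + 1))

/-- Kummer's confluent hypergeometric function `M(a, b, z) = ₁F₁(a; b; z)`. -/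
def kummerM (a b z : ℝ) : ℝ :=
  ∑' n : ℕ, ((∏ k ∈ Finset.range n, (a + k)) / (∏ k ∈ Finset.range n, (b + k)))
    * z ^ n / n.factorial

/-- The function `A_c(γ, τ)` from the SABR martingale defect formula. -/
def Ac (γ τ : ℝ) : ℝ :=
  Real.sqrt (2 * γ / Real.pi ^ 3) * Real.exp (-(γ + τ / 8)) *
    ∫ s in Set.Ioi (0:ℝ),
      (8 * s * Real.sinh (Real.pi * s) / (4 * s ^ 2 + 1)) * besselKi s γ *
        Real.exp (-s ^ 2 * τ / 2)

/-- `Y` solves the SDE `dY_t = b(Y_t) dt + σ(Y_t) dW_t`, `Y_0 = y₀`, up to the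
(possibly infinite) explosion time `ζ`. -/
def SolvesSDEUpTo {Ω : Type*} {mΩ : MeasurableSpace Ω} (μ : Measure Ω)
    (W Y : ℝ → Ω → ℝ) (b σ : ℝ → ℝ) (y₀ : ℝ) (ζ : Ω → ℝ≥0∞) : Prop :=
  (∀ᵐ ω ∂μ, Y 0 ω = y₀) ∧
  ∃ I : ℝ → Ω → ℝ,
    (∀ t : ℝ, 0 ≤ t →
      TendstoInMeasure (μ.restrict {ω | ENNReal.ofReal t < ζ ω})
        (fun n => itoSum (fun u ω => σ (Y u ω)) W t n) atTop (I t)) ∧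
    ∀ t : ℝ, 0 ≤ t → ∀ᵐ ω ∂μ.restrict {ω | ENNReal.ofReal t < ζ ω},
      Y t ω = y₀ + (∫ s in (0:ℝ)..t, b (Y s ω)) + I t ω

/-- The first hitting time of zero of a process, as an extended real number. -/
def hitZeroTime {Ω : Type*} (X : ℝ → Ω → ℝ) (ω : Ω) : ℝ≥0∞ :=
  ⨅ (s : {s : ℝ // 0 ≤ s ∧ X s ω = 0}), ENNReal.ofReal s.1


namespace SabrAux
open Real
open scoped Real

lemma nonneg_of_deriv (F F' : ℝ → ℝ) (hd : ∀ x, HasDerivAt F (F' x) x)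
    (h0 : F 0 = 0) (hF' : ∀ x, 0 ≤ x → 0 ≤ F' x) {x : ℝ} (hx : 0 ≤ x) : 0 ≤ F x := by
  have hmono : MonotoneOn F (Ici 0) := by
    apply monotoneOn_of_deriv_nonneg (convex_Ici 0)
    · exact fun y _ => (hd y).continuousAt.continuousWithinAt
    · exact fun y _ => (hd y).differentiableAt.differentiableWithinAt
    · intro y hy
      rw [(hd y).deriv]
      exact hF' y (le_of_lt (by simpa [interior_Ici] using hy))
  have := hmono self_mem_Ici hx hx
  simpa [h0] using this

lemma self_le_sinh {x : ℝ} (hx : 0 ≤ x) : x ≤ sinh x := by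
  have h : 0 ≤ Real.sinh x - x :=
    nonneg_of_deriv (fun y => Real.sinh y - y) (fun y => Real.cosh y - 1)
      (fun y => (Real.hasDerivAt_sinh y).sub (hasDerivAt_id y))
      (by simp) (fun y _ => by show (0:ℝ) ≤ Real.cosh y - 1; linarith [Real.one_le_cosh y]) hx
  linarith

lemma sinh_nonneg' {x : ℝ} (hx : 0 ≤ x) : 0 ≤ sinh x :=
  le_trans hx (self_le_sinh hx)

lemma sinh_le_mul_cosh {x : ℝ} (hx : 0 ≤ x) : sinh x ≤ x * cosh x := by
  have h : 0 ≤ x * Real.cosh x - Real.sinh x :=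
    nonneg_of_deriv (fun y => y * Real.cosh y - Real.sinh y)
      (fun y => y * Real.sinh y)
      (fun y => by
        have h : HasDerivAt (fun y => y * Real.cosh y - Real.sinh y)
            (1 * Real.cosh y + y * Real.sinh y - Real.cosh y) y :=
          ((hasDerivAt_id y).mul (Real.hasDerivAt_cosh y)).sub (Real.hasDerivAt_sinh y)
        exact h.congr_deriv (by ring))
      (by simp) (fun y hy => mul_nonneg hy (sinh_nonneg' hy)) hx
  linarith

lemma cosh_sub_one_le {x : ℝ} (hx : 0 ≤ x) : cosh x - 1 ≤ x * sinh x := by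
  have h : 0 ≤ x * Real.sinh x - Real.cosh x + 1 :=
    nonneg_of_deriv (fun y => y * Real.sinh y - Real.cosh y + 1)
      (fun y => y * Real.cosh y)
      (fun y => by
        have h : HasDerivAt (fun y => y * Real.sinh y - Real.cosh y + 1)
            (1 * Real.sinh y + y * Real.cosh y - Real.sinh y) y :=
          (((hasDerivAt_id y).mul (Real.hasDerivAt_sinh y)).sub (Real.hasDerivAt_cosh y)).add_const 1
        exact h.congr_deriv (by ring))
      (by simp) (fun y hy => mul_nonneg hy (le_trans zero_le_one (Real.one_le_cosh y))) hx
  linarith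

lemma sinh_sub_le {x : ℝ} (hx : 0 ≤ x) : sinh x - x ≤ x ^ 2 / 2 * sinh x := by
  have h : 0 ≤ x ^ 2 / 2 * Real.sinh x - Real.sinh x + x :=
    nonneg_of_deriv (fun y => y ^ 2 / 2 * Real.sinh y - Real.sinh y + y)
      (fun y => y * Real.sinh y + y ^ 2 / 2 * Real.cosh y - Real.cosh y + 1)
      (fun y => by
        have h1 : HasDerivAt (fun y : ℝ => y ^ 2 / 2) y y := by
          have := (hasDerivAt_pow 2 y).div_const 2
          simpa using this
        have h2 := ((h1.mul (Real.hasDerivAt_sinh y)).sub (Real.hasDerivAt_sinh y)).add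
          (hasDerivAt_id y)
        exact h2.congr_deriv (by ring))
      (by simp)
      (fun y hy => by
        show (0:ℝ) ≤ y * Real.sinh y + y ^ 2 / 2 * Real.cosh y - Real.cosh y + 1
        have h2 := cosh_sub_one_le hy
        have h3 : 0 ≤ y ^ 2 / 2 * Real.cosh y :=
          mul_nonneg (by positivity) (le_trans zero_le_one (Real.one_le_cosh y))
        linarith) hx
  linarith

lemma one_add_sq_le_cosh {x : ℝ} (hx : 0 ≤ x) : 1 + x ^ 2 / 2 ≤ cosh x := by
  have h : 0 ≤ Real.cosh x - 1 - x ^ 2 / 2 :=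
    nonneg_of_deriv (fun y => Real.cosh y - 1 - y ^ 2 / 2)
      (fun y => Real.sinh y - y)
      (fun y => by
        have h1 : HasDerivAt (fun y : ℝ => y ^ 2 / 2) y y := by
          have := (hasDerivAt_pow 2 y).div_const 2
          simpa using this
        exact ((Real.hasDerivAt_cosh y).sub_const 1).sub h1)
      (by simp) (fun y hy => by show (0:ℝ) ≤ Real.sinh y - y; linarith [self_le_sinh hy]) hx
  linarith

lemma cosh_le_exp' {x : ℝ} (hx : 0 ≤ x) : cosh x ≤ exp x := by
  rw [Real.cosh_eq]
  have h1 : Real.exp (-x) ≤ Real.exp x := Real.exp_le_exp.2 (by linarith)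
  linarith [Real.exp_pos x]


lemma exp_cosh_le {γ x : ℝ} (hγ : 0 < γ) (hx : 0 ≤ x) :
    Real.exp (-γ * Real.cosh x) ≤ Real.exp (-(γ / 2) * x ^ 2) := by
  apply Real.exp_le_exp.2
  have h := one_add_sq_le_cosh hx
  nlinarith

lemma integrable_pow_gauss (n : ℕ) {b : ℝ} (hb : 0 < b) :
    IntegrableOn (fun x : ℝ => x ^ n * Real.exp (-b * x ^ 2)) (Ioi 0) := by
  have h := integrableOn_rpow_mul_exp_neg_mul_sq hb (s := (n : ℝ))
    (lt_of_lt_of_le neg_one_lt_zero (Nat.cast_nonneg n))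
  apply h.congr_fun ?_ measurableSet_Ioi
  intro x hx
  simp [Real.rpow_natCast]

lemma integrable_exp_cosh {γ : ℝ} (hγ : 0 < γ) :
    IntegrableOn (fun t : ℝ => Real.exp (-γ * Real.cosh t)) (Ioi 0) := by
  have hb : IntegrableOn (fun x : ℝ => Real.exp (-(γ / 2) * x ^ 2)) (Ioi 0) := by
    have := integrable_pow_gauss 0 (half_pos hγ)
    simpa using this
  apply Integrable.mono' hb
  · exact (Real.continuous_exp.comp ((continuous_const.mul Real.continuous_cosh))).aestronglyMeasurable
  · filter_upwards [ae_restrict_mem measurableSet_Ioi] with t ht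
    rw [Real.norm_eq_abs, abs_of_nonneg (Real.exp_pos _).le]
    exact exp_cosh_le hγ (le_of_lt ht)

lemma integrable_sq_exp_cosh {γ : ℝ} (hγ : 0 < γ) :
    IntegrableOn (fun t : ℝ => t ^ 2 * Real.exp (-γ * Real.cosh t)) (Ioi 0) := by
  apply Integrable.mono' (integrable_pow_gauss 2 (half_pos hγ))
  · exact ((continuous_pow 2).mul
      (Real.continuous_exp.comp (continuous_const.mul Real.continuous_cosh))).aestronglyMeasurable
  · filter_upwards [ae_restrict_mem measurableSet_Ioi] with t ht
    rw [Real.norm_eq_abs, abs_mul, abs_of_nonneg (Real.exp_pos _).le, abs_of_nonneg (by positivity : (0:ℝ) ≤ t ^ 2)]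
    exact mul_le_mul_of_nonneg_left (exp_cosh_le hγ ht.le) (by positivity)

lemma integrable_besselKi_integrand {γ : ℝ} (hγ : 0 < γ) (s : ℝ) :
    IntegrableOn (fun t : ℝ => Real.exp (-γ * Real.cosh t) * Real.cos (s * t)) (Ioi 0) := by
  apply Integrable.mono' (integrable_exp_cosh hγ)
  · exact ((Real.continuous_exp.comp (continuous_const.mul Real.continuous_cosh)).mul
      (Real.continuous_cos.comp (continuous_const.mul continuous_id))).aestronglyMeasurable
  · refine Filter.Eventually.of_forall (fun t => ?_)
    rw [Real.norm_eq_abs, abs_mul, abs_of_nonneg (Real.exp_pos _).le]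
    calc Real.exp (-γ * Real.cosh t) * |Real.cos (s * t)|
        ≤ Real.exp (-γ * Real.cosh t) * 1 :=
          mul_le_mul_of_nonneg_left (Real.abs_cos_le_one _) (Real.exp_pos _).le
      _ = Real.exp (-γ * Real.cosh t) := mul_one _

lemma besselKi_zero_eq (γ : ℝ) :
    besselKi 0 γ = ∫ t in Ioi (0:ℝ), Real.exp (-γ * Real.cosh t) := by
  unfold besselKi
  refine setIntegral_congr_fun measurableSet_Ioi (fun t _ => ?_)
  simp

lemma besselKi_zero_pos {γ : ℝ} (hγ : 0 < γ) : 0 < besselKi 0 γ := by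
  rw [besselKi_zero_eq]
  have h1 : Real.exp (-γ * Real.cosh 1) * (volume (Ioc (0:ℝ) 1)).toReal
      ≤ ∫ t in Ioc (0:ℝ) 1, Real.exp (-γ * Real.cosh t) := by
    show Real.exp (-γ * Real.cosh 1) * volume.real (Ioc (0:ℝ) 1) ≤ _
    apply setIntegral_ge_of_const_le_real measurableSet_Ioc (by simp)
    · intro t ht
      apply Real.exp_le_exp.2
      have : Real.cosh t ≤ Real.cosh 1 := by
        rw [Real.cosh_le_cosh]
        rw [abs_of_nonneg ht.1.le, abs_one]
        exact ht.2
      nlinarith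
    · exact (integrable_exp_cosh hγ).mono_set Ioc_subset_Ioi_self
  have h2 : (∫ t in Ioc (0:ℝ) 1, Real.exp (-γ * Real.cosh t))
      ≤ ∫ t in Ioi (0:ℝ), Real.exp (-γ * Real.cosh t) := by
    apply setIntegral_mono_set (integrable_exp_cosh hγ)
      (Filter.Eventually.of_forall (fun t => (Real.exp_pos _).le))
    exact HasSubset.Subset.eventuallyLE Ioc_subset_Ioi_self
  have h3 : (volume (Ioc (0:ℝ) 1)).toReal = 1 := by simp
  rw [h3, mul_one] at h1
  exact lt_of_lt_of_le (Real.exp_pos _) (le_trans h1 h2)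

lemma abs_besselKi_le {γ : ℝ} (hγ : 0 < γ) (s : ℝ) : |besselKi s γ| ≤ besselKi 0 γ := by
  rw [besselKi_zero_eq]
  unfold besselKi
  rw [← Real.norm_eq_abs]
  apply norm_integral_le_of_norm_le (integrable_exp_cosh hγ)
  refine Filter.Eventually.of_forall (fun t => ?_)
  rw [Real.norm_eq_abs, abs_mul, abs_of_nonneg (Real.exp_pos _).le]
  calc Real.exp (-γ * Real.cosh t) * |Real.cos (s * t)|
      ≤ Real.exp (-γ * Real.cosh t) * 1 :=
        mul_le_mul_of_nonneg_left (Real.abs_cos_le_one _) (Real.exp_pos _).le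
    _ = _ := mul_one _

lemma abs_besselKi_sub_le {γ : ℝ} (hγ : 0 < γ) (s : ℝ) :
    |besselKi s γ - besselKi 0 γ|
      ≤ s ^ 2 / 2 * ∫ t in Ioi (0:ℝ), t ^ 2 * Real.exp (-γ * Real.cosh t) := by
  rw [besselKi_zero_eq]
  unfold besselKi
  rw [← integral_sub (integrable_besselKi_integrand hγ s) (integrable_exp_cosh hγ)]
  rw [← Real.norm_eq_abs]
  have key : ‖∫ t in Ioi (0:ℝ), (Real.exp (-γ * Real.cosh t) * Real.cos (s * t)
      - Real.exp (-γ * Real.cosh t))‖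
      ≤ ∫ t in Ioi (0:ℝ), s ^ 2 / 2 * (t ^ 2 * Real.exp (-γ * Real.cosh t)) := by
    apply norm_integral_le_of_norm_le ((integrable_sq_exp_cosh hγ).const_mul _)
    filter_upwards [ae_restrict_mem measurableSet_Ioi] with t ht
    rw [Real.norm_eq_abs]
    have h1 : Real.exp (-γ * Real.cosh t) * Real.cos (s * t) - Real.exp (-γ * Real.cosh t)
        = -(Real.exp (-γ * Real.cosh t) * (1 - Real.cos (s * t))) := by ring
    rw [h1, abs_neg, abs_of_nonneg (mul_nonneg (Real.exp_pos _).le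
      (by linarith [Real.cos_le_one (s * t)]))]
    have h2 : 1 - Real.cos (s * t) ≤ (s * t) ^ 2 / 2 := by
      linarith [Real.one_sub_sq_div_two_le_cos (x := s * t)]
    calc Real.exp (-γ * Real.cosh t) * (1 - Real.cos (s * t))
        ≤ Real.exp (-γ * Real.cosh t) * ((s * t) ^ 2 / 2) :=
          mul_le_mul_of_nonneg_left h2 (Real.exp_pos _).le
      _ = s ^ 2 / 2 * (t ^ 2 * Real.exp (-γ * Real.cosh t)) := by ring
  calc ‖_‖ ≤ _ := key
    _ = s ^ 2 / 2 * ∫ t in Ioi (0:ℝ), t ^ 2 * Real.exp (-γ * Real.cosh t) := by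
      rw [integral_const_mul]

lemma besselKi_continuous {γ : ℝ} (hγ : 0 < γ) : Continuous fun s => besselKi s γ := by
  unfold besselKi
  apply continuous_of_dominated (bound := fun t => Real.exp (-γ * Real.cosh t))
  · intro s
    exact ((Real.continuous_exp.comp (continuous_const.mul Real.continuous_cosh)).mul
      (Real.continuous_cos.comp (continuous_const.mul continuous_id))).aestronglyMeasurable
  · intro s
    refine Filter.Eventually.of_forall (fun t => ?_)
    rw [Real.norm_eq_abs, abs_mul, abs_of_nonneg (Real.exp_pos _).le]
    calc Real.exp (-γ * Real.cosh t) * |Real.cos (s * t)|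
        ≤ Real.exp (-γ * Real.cosh t) * 1 :=
          mul_le_mul_of_nonneg_left (Real.abs_cos_le_one _) (Real.exp_pos _).le
      _ = _ := mul_one _
  · exact integrable_exp_cosh hγ
  · refine Filter.Eventually.of_forall (fun t => ?_)
    exact continuous_const.mul (Real.continuous_cos.comp (continuous_id.mul continuous_const))


lemma sqrt_eq_of_sq_eq {a b : ℝ} (ha : 0 ≤ a) (hb : 0 ≤ b) (h : a ^ 2 = b ^ 2) : a = b := by
  have habs : |a| = |b| := by
    rw [← Real.sqrt_sq_eq_abs, ← Real.sqrt_sq_eq_abs, h]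
  rwa [abs_of_nonneg ha, abs_of_nonneg hb] at habs

lemma gamma_three_halves : Real.Gamma (3 / 2) = Real.sqrt π / 2 := by
  have h : (3 / 2 : ℝ) = 1 / 2 + 1 := by norm_num
  rw [h, Real.Gamma_add_one (by norm_num), Real.Gamma_one_half_eq]
  ring

lemma integral_sq_gauss {b : ℝ} (hb : 0 < b) :
    ∫ x in Ioi (0:ℝ), x ^ 2 * Real.exp (-b * x ^ 2)
      = Real.sqrt π / 4 * (1 / (b * Real.sqrt b)) := by
  have h := integral_rpow_mul_exp_neg_mul_rpow (p := 2) (q := 2) (by norm_num) (by norm_num) hb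
  have heq : ∫ x in Ioi (0:ℝ), x ^ 2 * Real.exp (-b * x ^ 2)
      = ∫ x in Ioi (0:ℝ), x ^ (2:ℝ) * Real.exp (-b * x ^ (2:ℝ)) := by
    refine setIntegral_congr_fun measurableSet_Ioi (fun x hx => ?_)
    rw [show ((2:ℝ)) = ((2:ℕ):ℝ) by norm_num, Real.rpow_natCast]
  rw [heq, h]
  have hb32 : b ^ (-(2 + 1) / 2 : ℝ) = 1 / (b * Real.sqrt b) := by
    rw [show (-(2 + 1) / 2 : ℝ) = -(3 / 2) by norm_num, Real.rpow_neg hb.le]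
    rw [show (3 / 2 : ℝ) = 1 + 1 / 2 by norm_num, Real.rpow_add hb, Real.rpow_one,
      ← Real.sqrt_eq_rpow]
    rw [one_div]
  rw [hb32, show ((2:ℝ) + 1) / 2 = 3 / 2 by norm_num, gamma_three_halves]
  ring

lemma integral_cube_gauss {b : ℝ} (hb : 0 < b) :
    ∫ x in Ioi (0:ℝ), x ^ 3 * Real.exp (-b * x ^ 2) = 1 / (2 * b ^ 2) := by
  have h := integral_rpow_mul_exp_neg_mul_rpow (p := 2) (q := 3) (by norm_num) (by norm_num) hb
  have heq : ∫ x in Ioi (0:ℝ), x ^ 3 * Real.exp (-b * x ^ 2)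
      = ∫ x in Ioi (0:ℝ), x ^ (3:ℝ) * Real.exp (-b * x ^ (2:ℝ)) := by
    refine setIntegral_congr_fun measurableSet_Ioi (fun x hx => ?_)
    rw [show ((3:ℝ)) = ((3:ℕ):ℝ) by norm_num, show ((2:ℝ)) = ((2:ℕ):ℝ) by norm_num,
      Real.rpow_natCast, Real.rpow_natCast]
  rw [heq, h]
  have hb2 : b ^ (-(3 + 1) / 2 : ℝ) = (b ^ 2)⁻¹ := by
    rw [show (-(3 + 1) / 2 : ℝ) = -2 by norm_num, Real.rpow_neg hb.le]
    rw [show ((2:ℝ)) = ((2:ℕ):ℝ) by norm_num, Real.rpow_natCast]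
  rw [hb2, show ((3:ℝ) + 1) / 2 = 2 by norm_num, Real.Gamma_two]
  field_simp


lemma weight_le {τ s : ℝ} (hτ : 1 ≤ τ) (hs : 0 ≤ s) :
    Real.exp (2*π*s) * Real.exp (-s^2*τ/2) ≤ Real.exp (4*π^2) * Real.exp (-(τ/4)*s^2) := by
  rw [← Real.exp_add, ← Real.exp_add]
  apply Real.exp_le_exp.2
  nlinarith [sq_nonneg (s - 4*π), mul_nonneg (mul_nonneg (sub_nonneg.2 hτ) hs) hs, Real.pi_pos]

lemma lead_const_eq {γ τ : ℝ} (hγ : 0 < γ) (hτ : 0 < τ) :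
    Real.sqrt (2*γ/π^3) * (8*π) * (Real.sqrt π/4) * (1/((τ/2)*Real.sqrt (τ/2)))
      = 8*Real.sqrt γ / (τ*Real.sqrt τ) := by
  have hπ := Real.pi_pos
  have h3 : (0:ℝ) < Real.sqrt (τ/2) := Real.sqrt_pos.2 (by positivity)
  have h5 : (0:ℝ) < Real.sqrt τ := Real.sqrt_pos.2 hτ
  have cube : ∀ x : ℝ, 0 < x → x * Real.sqrt x = Real.sqrt (x^3) := by
    intro x hx
    rw [show x^3 = x^2*x from by ring, Real.sqrt_mul (sq_nonneg x), Real.sqrt_sq hx.le]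
  have c1 : τ * Real.sqrt τ = Real.sqrt (τ^3) := cube τ hτ
  have c2 : (τ/2) * Real.sqrt (τ/2) = Real.sqrt ((τ/2)^3) := cube _ (by positivity)
  have c3 : Real.sqrt ((τ/2)^3) = Real.sqrt (τ^3) / Real.sqrt 8 := by
    rw [← Real.sqrt_div (by positivity)]
    congr 1; ring
  have hτ3 : (0:ℝ) < Real.sqrt (τ^3) := Real.sqrt_pos.2 (by positivity)
  have h8 : (0:ℝ) < Real.sqrt 8 := Real.sqrt_pos.2 (by norm_num)
  have key : Real.sqrt (2*γ/π^3)*(8*π)*(Real.sqrt π/4)*Real.sqrt 8 = 8*Real.sqrt γ := by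
    apply sqrt_eq_of_sq_eq ?_ (by positivity)
    · simp only [mul_pow, div_pow]
      rw [Real.sq_sqrt (show (0:ℝ) ≤ 2*γ/π^3 by positivity), Real.sq_sqrt hπ.le,
        Real.sq_sqrt (by norm_num : (0:ℝ) ≤ 8), Real.sq_sqrt hγ.le]
      field_simp
      ring
    · have hsq : (0:ℝ) ≤ Real.sqrt (2*γ/π^3) := Real.sqrt_nonneg _
      have hsp : (0:ℝ) ≤ Real.sqrt π := Real.sqrt_nonneg _
      positivity
  rw [c1, c2, c3, one_div_div, show Real.sqrt (2*γ/π^3)*(8*π)*(Real.sqrt π/4)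
      *(Real.sqrt 8/Real.sqrt (τ^3))
      = (Real.sqrt (2*γ/π^3)*(8*π)*(Real.sqrt π/4)*Real.sqrt 8)/Real.sqrt (τ^3) from by ring,
    key]

set_option maxHeartbeats 1000000 in
lemma main_est {γ τ : ℝ} (hγ : 0 < γ) (hτ : 1 ≤ τ) :
    |(∫ s in Ioi (0:ℝ),
        (8 * s * Real.sinh (π * s) / (4 * s ^ 2 + 1)) * besselKi s γ *
          Real.exp (-s ^ 2 * τ / 2))
      - 8 * π * besselKi 0 γ *
          (Real.sqrt π / 4 * (1 / ((τ/2) * Real.sqrt (τ/2))))|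
    ≤ ((4 * π ^ 3 + 32 * π) * besselKi 0 γ
        + 4 * π * ∫ t in Ioi (0:ℝ), t ^ 2 * Real.exp (-γ * Real.cosh t))
        * Real.exp (4 * π ^ 2) * (8 / τ ^ 2) := by
  have hτ0 : (0:ℝ) < τ := lt_of_lt_of_le one_pos hτ
  have hq : (0:ℝ) < τ/4 := by positivity
  have hh : (0:ℝ) < τ/2 := by positivity
  have hπ := Real.pi_pos
  have hπ1 : (1:ℝ) ≤ π := by linarith [Real.pi_gt_three]
  set K0 := besselKi 0 γ with hK0def
  set C2 := ∫ t in Ioi (0:ℝ), t ^ 2 * Real.exp (-γ * Real.cosh t) with hC2def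
  have hK0 : 0 < K0 := besselKi_zero_pos hγ
  have hC2 : 0 ≤ C2 := setIntegral_nonneg measurableSet_Ioi (fun t ht => by positivity)
  set D := (4*π^3+32*π)*K0 + 4*π*C2 with hDdef
  have hD : 0 ≤ D := by
    have h1 : (0:ℝ) ≤ (4*π^3+32*π)*K0 := mul_nonneg (by positivity) hK0.le
    have h2 : (0:ℝ) ≤ 4*π*C2 := mul_nonneg (by positivity) hC2
    linarith
  -- pointwise bound
  have hpt : ∀ s : ℝ, 0 < s →
      |(8*s*Real.sinh (π*s)/(4*s^2+1)) * besselKi s γ - 8*π*s^2*K0|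
        ≤ D * (s^3 * Real.exp (2*π*s)) := by
    intro s hs
    have hs0 : (0:ℝ) ≤ s := hs.le
    have hps : (0:ℝ) ≤ π*s := by positivity
    have hsinh0 : 0 ≤ Real.sinh (π*s) := sinh_nonneg' hps
    have hden0 : (0:ℝ) < 4*s^2+1 := by positivity
    have hden1 : (1:ℝ) ≤ 4*s^2+1 := by nlinarith
    have hsle : s ≤ Real.exp (π*s) := by
      have h1 : s ≤ Real.exp s := by linarith [Real.add_one_le_exp s]
      have h2 : Real.exp s ≤ Real.exp (π*s) := Real.exp_le_exp.2 (by nlinarith)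
      linarith
    have hexpmul : Real.exp (π*s) * Real.exp (π*s) = Real.exp (2*π*s) := by
      rw [← Real.exp_add]; ring_nf
    have key1 : s^4*Real.exp (π*s) ≤ s^3*Real.exp (2*π*s) := by
      have h1 : s*Real.exp (π*s) ≤ Real.exp (π*s)*Real.exp (π*s) :=
        mul_le_mul_of_nonneg_right hsle (Real.exp_pos _).le
      calc s^4*Real.exp (π*s) = s^3*(s*Real.exp (π*s)) := by ring
        _ ≤ s^3*(Real.exp (π*s)*Real.exp (π*s)) :=
          mul_le_mul_of_nonneg_left h1 (by positivity)
        _ = s^3*Real.exp (2*π*s) := by rw [hexpmul]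
    have key2 : s^4 ≤ s^3*Real.exp (2*π*s) := by
      have h1 : s ≤ Real.exp (2*π*s) := by
        have := Real.exp_le_exp.2 (show π*s ≤ 2*π*s by nlinarith)
        linarith
      calc s^4 = s^3*s := by ring
        _ ≤ s^3*Real.exp (2*π*s) := mul_le_mul_of_nonneg_left h1 (by positivity)
    have hKb := abs_besselKi_le hγ s
    have hKd := abs_besselKi_sub_le hγ s
    rw [← hC2def] at hKd
    have hsinh : |Real.sinh (π*s) - π*s| ≤ π^3*s^3/2 * Real.exp (π*s) := by
      have h1 := sinh_sub_le hps
      have h2 := sinh_le_mul_cosh hps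
      have h3 := cosh_le_exp' hps
      have h4 := self_le_sinh hps
      rw [abs_of_nonneg (by linarith)]
      have h5 : Real.sinh (π*s) ≤ π*s*Real.exp (π*s) := by nlinarith
      calc Real.sinh (π*s) - π*s ≤ (π*s)^2/2 * Real.sinh (π*s) := h1
        _ ≤ (π*s)^2/2 * (π*s*Real.exp (π*s)) := by nlinarith [sq_nonneg (π*s)]
        _ = π^3*s^3/2 * Real.exp (π*s) := by ring
    have hf : |8*s*Real.sinh (π*s)/(4*s^2+1) - 8*π*s^2|
        ≤ (4*π^3+32*π) * (s^3*Real.exp (2*π*s)) := by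
      have heq : 8*s*Real.sinh (π*s)/(4*s^2+1) - 8*π*s^2
          = (8*s*(Real.sinh (π*s) - π*s) - 32*π*s^4)/(4*s^2+1) := by
        field_simp; ring
      rw [heq, abs_div, abs_of_pos hden0]
      have habs : |8*s*(Real.sinh (π*s) - π*s) - 32*π*s^4|
          ≤ 8*s*|Real.sinh (π*s) - π*s| + 32*π*s^4 := by
        calc |8*s*(Real.sinh (π*s) - π*s) - 32*π*s^4|
            ≤ |8*s*(Real.sinh (π*s) - π*s)| + |32*π*s^4| := abs_sub _ _
          _ = 8*s*|Real.sinh (π*s) - π*s| + 32*π*s^4 := by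
            rw [abs_mul, abs_of_nonneg (by positivity : (0:ℝ) ≤ 8*s),
              abs_of_nonneg (by positivity : (0:ℝ) ≤ 32*π*s^4)]
      have hnum : |8*s*(Real.sinh (π*s) - π*s) - 32*π*s^4|
          ≤ (4*π^3+32*π) * (s^3*Real.exp (2*π*s)) := by
        have h6 : 8*s*|Real.sinh (π*s) - π*s| ≤ 8*s*(π^3*s^3/2 * Real.exp (π*s)) :=
          mul_le_mul_of_nonneg_left hsinh (by positivity)
        have h7 : 8*s*(π^3*s^3/2 * Real.exp (π*s)) = 4*π^3*(s^4*Real.exp (π*s)) := by ring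
        have h8 : 4*π^3*(s^4*Real.exp (π*s)) ≤ 4*π^3*(s^3*Real.exp (2*π*s)) :=
          mul_le_mul_of_nonneg_left key1 (by positivity)
        have h9 : 32*π*s^4 ≤ 32*π*(s^3*Real.exp (2*π*s)) :=
          mul_le_mul_of_nonneg_left key2 (by positivity)
        calc |8*s*(Real.sinh (π*s) - π*s) - 32*π*s^4|
            ≤ 8*s*|Real.sinh (π*s) - π*s| + 32*π*s^4 := habs
          _ ≤ 4*π^3*(s^3*Real.exp (2*π*s)) + 32*π*(s^3*Real.exp (2*π*s)) := by
            rw [← h7] at h8; linarith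
          _ = (4*π^3+32*π) * (s^3*Real.exp (2*π*s)) := by ring
      calc |8*s*(Real.sinh (π*s) - π*s) - 32*π*s^4|/(4*s^2+1)
          ≤ |8*s*(Real.sinh (π*s) - π*s) - 32*π*s^4| :=
            div_le_self (abs_nonneg _) hden1
        _ ≤ (4*π^3+32*π) * (s^3*Real.exp (2*π*s)) := hnum
    have hsplit : (8*s*Real.sinh (π*s)/(4*s^2+1)) * besselKi s γ - 8*π*s^2*K0
        = (8*s*Real.sinh (π*s)/(4*s^2+1) - 8*π*s^2) * besselKi s γ
          + 8*π*s^2*(besselKi s γ - K0) := by ring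
    rw [hsplit]
    have t1 : |(8*s*Real.sinh (π*s)/(4*s^2+1) - 8*π*s^2) * besselKi s γ|
        ≤ (4*π^3+32*π) * (s^3*Real.exp (2*π*s)) * K0 := by
      rw [abs_mul]
      exact mul_le_mul hf hKb (abs_nonneg _) (by positivity)
    have t2 : |8*π*s^2*(besselKi s γ - K0)| ≤ 8*π*s^2*(s^2/2*C2) := by
      rw [abs_mul, abs_of_nonneg (by positivity : (0:ℝ) ≤ 8*π*s^2)]
      exact mul_le_mul_of_nonneg_left hKd (by positivity)
    have t3 : 8*π*s^2*(s^2/2*C2) = 4*π*C2*s^4 := by ring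
    have t4 : 4*π*C2*s^4 ≤ 4*π*C2*(s^3*Real.exp (2*π*s)) :=
      mul_le_mul_of_nonneg_left key2 (by positivity)
    calc |(8*s*Real.sinh (π*s)/(4*s^2+1) - 8*π*s^2) * besselKi s γ
          + 8*π*s^2*(besselKi s γ - K0)|
        ≤ |(8*s*Real.sinh (π*s)/(4*s^2+1) - 8*π*s^2) * besselKi s γ|
          + |8*π*s^2*(besselKi s γ - K0)| := abs_add_le _ _
      _ ≤ (4*π^3+32*π) * (s^3*Real.exp (2*π*s)) * K0 + 4*π*C2*(s^3*Real.exp (2*π*s)) := by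
          rw [t3] at t2; linarith
      _ = D * (s^3 * Real.exp (2*π*s)) := by rw [hDdef]; ring
  -- continuity / integrability
  have hcontf : Continuous (fun s : ℝ => 8*s*Real.sinh (π*s)/(4*s^2+1)) := by
    apply Continuous.div
    · exact (continuous_const.mul continuous_id).mul
        (Real.continuous_sinh.comp (continuous_const.mul continuous_id))
    · fun_prop
    · intro s; positivity
  have hcontA : Continuous (fun s : ℝ =>
      (8*s*Real.sinh (π*s)/(4*s^2+1)) * besselKi s γ * Real.exp (-s^2*τ/2)) := by
    apply Continuous.mul
    · exact hcontf.mul (besselKi_continuous hγ)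
    · exact Real.continuous_exp.comp (by fun_prop)
  have hfle : ∀ s : ℝ, 0 < s →
      8*s*Real.sinh (π*s)/(4*s^2+1) ≤ 8*π*s^2*Real.exp (2*π*s) := by
    intro s hs
    have hs0 : (0:ℝ) ≤ s := hs.le
    have hps : (0:ℝ) ≤ π*s := by positivity
    have h2 := sinh_le_mul_cosh hps
    have h3 := cosh_le_exp' hps
    have hnum : 8*s*Real.sinh (π*s) ≤ 8*π*s^2*Real.exp (π*s) := by
      calc 8*s*Real.sinh (π*s) ≤ 8*s*(π*s*Real.cosh (π*s)) :=
            mul_le_mul_of_nonneg_left h2 (by positivity)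
        _ = 8*π*s^2*Real.cosh (π*s) := by ring
        _ ≤ 8*π*s^2*Real.exp (π*s) := mul_le_mul_of_nonneg_left h3 (by positivity)
    have hexp2 : Real.exp (π*s) ≤ Real.exp (2*π*s) :=
      Real.exp_le_exp.2 (by nlinarith [Real.pi_pos])
    calc 8*s*Real.sinh (π*s)/(4*s^2+1) ≤ 8*s*Real.sinh (π*s) := by
          apply div_le_self (mul_nonneg (by positivity) (sinh_nonneg' hps)) (by nlinarith)
      _ ≤ 8*π*s^2*Real.exp (π*s) := hnum
      _ ≤ 8*π*s^2*Real.exp (2*π*s) := mul_le_mul_of_nonneg_left hexp2 (by positivity)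
  have hIA : IntegrableOn (fun s : ℝ =>
      (8*s*Real.sinh (π*s)/(4*s^2+1)) * besselKi s γ * Real.exp (-s^2*τ/2)) (Ioi 0) := by
    apply Integrable.mono' ((integrable_pow_gauss 2 hq).const_mul (8*π*K0*Real.exp (4*π^2)))
    · exact hcontA.aestronglyMeasurable
    · filter_upwards [ae_restrict_mem measurableSet_Ioi] with s hs
      have hs0 : (0:ℝ) ≤ s := (mem_Ioi.1 hs).le
      have hps : (0:ℝ) ≤ π*s := by positivity
      have hf0 : (0:ℝ) ≤ 8*s*Real.sinh (π*s)/(4*s^2+1) := by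
        apply div_nonneg _ (by positivity)
        exact mul_nonneg (by positivity) (sinh_nonneg' hps)
      rw [Real.norm_eq_abs, abs_mul, abs_mul, abs_of_nonneg hf0,
        abs_of_nonneg (Real.exp_pos _).le]
      have step1 : 8*s*Real.sinh (π*s)/(4*s^2+1) * |besselKi s γ|
          ≤ 8*π*s^2*Real.exp (2*π*s) * K0 := by
        apply mul_le_mul (hfle s (mem_Ioi.1 hs)) (abs_besselKi_le hγ s) (abs_nonneg _)
          (by positivity)
      calc 8*s*Real.sinh (π*s)/(4*s^2+1) * |besselKi s γ| * Real.exp (-s^2*τ/2)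
          ≤ 8*π*s^2*Real.exp (2*π*s) * K0 * Real.exp (-s^2*τ/2) := by
            apply mul_le_mul_of_nonneg_right step1 (Real.exp_pos _).le
        _ = 8*π*K0*s^2 * (Real.exp (2*π*s) * Real.exp (-s^2*τ/2)) := by ring
        _ ≤ 8*π*K0*s^2 * (Real.exp (4*π^2) * Real.exp (-(τ/4)*s^2)) := by
            apply mul_le_mul_of_nonneg_left (weight_le hτ hs0) (by positivity)
        _ = 8*π*K0*Real.exp (4*π^2) * (s^2 * Real.exp (-(τ/4)*s^2)) := by ring
  have hIB : IntegrableOn (fun s : ℝ => 8*π*K0*(s^2*Real.exp (-s^2*τ/2))) (Ioi 0) := by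
    apply Integrable.const_mul
    exact (integrable_pow_gauss 2 hh).congr_fun
      (fun x _ => by dsimp only; rw [show -(τ/2)*x^2 = -x^2*τ/2 from by ring]) measurableSet_Ioi
  have hBval : ∫ s in Ioi (0:ℝ), 8*π*K0*(s^2*Real.exp (-s^2*τ/2))
      = 8*π*K0 * (Real.sqrt π/4 * (1/((τ/2)*Real.sqrt (τ/2)))) := by
    rw [MeasureTheory.integral_const_mul]
    congr 1
    rw [show (∫ s in Ioi (0:ℝ), s^2*Real.exp (-s^2*τ/2))
        = ∫ s in Ioi (0:ℝ), s^2*Real.exp (-(τ/2)*s^2) from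
      setIntegral_congr_fun measurableSet_Ioi
        (fun x _ => by rw [show -x^2*τ/2 = -(τ/2)*x^2 from by ring])]
    exact integral_sq_gauss hh
  rw [show 8 * π * K0 * (Real.sqrt π / 4 * (1 / ((τ/2) * Real.sqrt (τ/2)))) = _ from hBval.symm]
  rw [← integral_sub hIA hIB]
  have hbd : ∀ᵐ s ∂(volume.restrict (Ioi (0:ℝ))),
      ‖(8*s*Real.sinh (π*s)/(4*s^2+1)) * besselKi s γ * Real.exp (-s^2*τ/2)
        - 8*π*K0*(s^2*Real.exp (-s^2*τ/2))‖
      ≤ D*Real.exp (4*π^2) * (s^3*Real.exp (-(τ/4)*s^2)) := by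
    filter_upwards [ae_restrict_mem measurableSet_Ioi] with s hs
    have hs' : 0 < s := mem_Ioi.1 hs
    have heq : (8*s*Real.sinh (π*s)/(4*s^2+1)) * besselKi s γ * Real.exp (-s^2*τ/2)
        - 8*π*K0*(s^2*Real.exp (-s^2*τ/2))
        = ((8*s*Real.sinh (π*s)/(4*s^2+1)) * besselKi s γ - 8*π*s^2*K0)
          * Real.exp (-s^2*τ/2) := by ring
    rw [heq, Real.norm_eq_abs, abs_mul, abs_of_nonneg (Real.exp_pos _).le]
    calc |(8*s*Real.sinh (π*s)/(4*s^2+1)) * besselKi s γ - 8*π*s^2*K0|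
          * Real.exp (-s^2*τ/2)
        ≤ D * (s^3 * Real.exp (2*π*s)) * Real.exp (-s^2*τ/2) :=
          mul_le_mul_of_nonneg_right (hpt s hs') (Real.exp_pos _).le
      _ = D * s^3 * (Real.exp (2*π*s) * Real.exp (-s^2*τ/2)) := by ring
      _ ≤ D * s^3 * (Real.exp (4*π^2) * Real.exp (-(τ/4)*s^2)) := by
          apply mul_le_mul_of_nonneg_left (weight_le hτ hs'.le) (by positivity)
      _ = D*Real.exp (4*π^2) * (s^3*Real.exp (-(τ/4)*s^2)) := by ring
  have hnorm := norm_integral_le_of_norm_le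
    ((integrable_pow_gauss 3 hq).const_mul (D*Real.exp (4*π^2))) hbd
  rw [Real.norm_eq_abs] at hnorm
  calc |∫ s in Ioi (0:ℝ), ((8*s*Real.sinh (π*s)/(4*s^2+1)) * besselKi s γ
        * Real.exp (-s^2*τ/2) - 8*π*K0*(s^2*Real.exp (-s^2*τ/2)))|
      ≤ ∫ s in Ioi (0:ℝ), D*Real.exp (4*π^2) * (s^3*Real.exp (-(τ/4)*s^2)) := hnorm
    _ = D*Real.exp (4*π^2) * (1/(2*(τ/4)^2)) := by
        rw [MeasureTheory.integral_const_mul, integral_cube_gauss hq]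
    _ = D * Real.exp (4*π^2) * (8/τ^2) := by
        rw [show 1/(2*(τ/4)^2) = 8/τ^2 from by field_simp; ring]


end SabrAux

open scoped Real
open SabrAux
set_option maxHeartbeats 1000000
/-- Large-maturity asymptotics of the normalized SABR martingale defect:
`d(T) = 1 - e^{-2γ} - (8√γ/√(ν⁶T³)) e^{-(γ + ν²T/8)} K₀(γ) (1 + O(T^{-1/2}))`. -/
theorem sabr_defect_large_time_asymptotics
    (γ ν : ℝ) (hγ : 0 < γ) (hν : 0 < ν) :
    ∃ C : ℝ, 0 < C ∧ ∃ T₀ : ℝ, 0 < T₀ ∧ ∀ T : ℝ, T₀ ≤ T →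
      |(1 - Real.exp (-2 * γ) - Ac γ (ν ^ 2 * T))
          - (1 - Real.exp (-2 * γ)
            - (8 * Real.sqrt γ / Real.sqrt (ν ^ 6 * T ^ 3))
              * Real.exp (-(γ + ν ^ 2 * T / 8)) * besselKi 0 γ)|
        ≤ C * ((8 * Real.sqrt γ / Real.sqrt (ν ^ 6 * T ^ 3))
              * Real.exp (-(γ + ν ^ 2 * T / 8)) * besselKi 0 γ) / Real.sqrt T := by
  classical
  have hπ : (0:ℝ) < Real.pi := Real.pi_pos
  have hK0 : 0 < besselKi 0 γ := besselKi_zero_pos hγ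
  have hC2 : 0 ≤ ∫ t in Ioi (0:ℝ), t ^ 2 * Real.exp (-γ * Real.cosh t) :=
    setIntegral_nonneg measurableSet_Ioi (fun t _ => by positivity)
  set K0 := besselKi 0 γ with hK0def
  set C2 := ∫ t in Ioi (0:ℝ), t ^ 2 * Real.exp (-γ * Real.cosh t) with hC2def
  set D := (4 * Real.pi ^ 3 + 32 * Real.pi) * K0 + 4 * Real.pi * C2 with hDdef
  have hD : 0 ≤ D := by
    have h1 : (0:ℝ) ≤ (4*Real.pi^3+32*Real.pi)*K0 := mul_nonneg (by positivity) hK0.le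
    have h2 : (0:ℝ) ≤ 4*Real.pi*C2 := mul_nonneg (by positivity) hC2
    linarith
  set A := Real.sqrt (2*γ/Real.pi^3) * D * Real.exp (4*Real.pi^2) with hAdef
  have hA : 0 ≤ A := mul_nonneg (mul_nonneg (Real.sqrt_nonneg _) hD) (Real.exp_pos _).le
  have hden : (0:ℝ) < Real.sqrt γ * K0 * ν :=
    mul_pos (mul_pos (Real.sqrt_pos.2 hγ) hK0) hν
  refine ⟨A / (Real.sqrt γ * K0 * ν) + 1, ?_, max 1 (1/ν^2), ?_, ?_⟩
  · have := div_nonneg hA hden.le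
    linarith
  · exact lt_of_lt_of_le one_pos (le_max_left _ _)
  intro T hT
  have hT1 : (1:ℝ) ≤ T := le_trans (le_max_left _ _) hT
  have hT0 : (0:ℝ) < T := lt_of_lt_of_le one_pos hT1
  have hτ1 : (1:ℝ) ≤ ν^2*T := by
    have h2 : 1/ν^2 ≤ T := le_trans (le_max_right _ _) hT
    have h3 : (0:ℝ) < ν^2 := by positivity
    calc (1:ℝ) = ν^2*(1/ν^2) := by field_simp
      _ ≤ ν^2*T := mul_le_mul_of_nonneg_left h2 h3.le
  have hτ0 : (0:ℝ) < ν^2*T := lt_of_lt_of_le one_pos hτ1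
  have hsqT : (0:ℝ) < Real.sqrt T := Real.sqrt_pos.2 hT0
  have hsqτ : Real.sqrt (ν^2*T) = ν*Real.sqrt T := by
    rw [Real.sqrt_mul (sq_nonneg ν), Real.sqrt_sq hν.le]
  have hS : (0:ℝ) < (ν^2*T)*Real.sqrt (ν^2*T) :=
    mul_pos hτ0 (Real.sqrt_pos.2 hτ0)
  have hν6 : Real.sqrt (ν^6*T^3) = (ν^2*T)*Real.sqrt (ν^2*T) := by
    rw [show ν^6*T^3 = (ν^2*T)^2*(ν^2*T) from by ring,
      Real.sqrt_mul (sq_nonneg _), Real.sqrt_sq hτ0.le]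
  have hE : (0:ℝ) < Real.exp (-(γ + ν^2*T/8)) := Real.exp_pos _
  set E := Real.exp (-(γ + ν^2*T/8)) with hEdef
  set S := (ν^2*T)*Real.sqrt (ν^2*T) with hSdef
  -- reduce goal to |Ac - Lead|
  have hgoal1 : (1 - Real.exp (-2*γ) - Ac γ (ν^2*T))
      - (1 - Real.exp (-2*γ) - (8*Real.sqrt γ/Real.sqrt (ν^6*T^3)) * E * K0)
      = (8*Real.sqrt γ/Real.sqrt (ν^6*T^3)) * E * K0 - Ac γ (ν^2*T) := by ring
  rw [hgoal1, abs_sub_comm, hν6]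
  -- key estimate
  have hP : (0:ℝ) ≤ Real.sqrt (2*γ/Real.pi^3) * E :=
    mul_nonneg (Real.sqrt_nonneg _) hE.le
  have hAc : Ac γ (ν^2*T) = Real.sqrt (2*γ/Real.pi^3) * E *
      ∫ s in Ioi (0:ℝ), (8*s*Real.sinh (Real.pi*s)/(4*s^2+1)) * besselKi s γ *
        Real.exp (-s^2*(ν^2*T)/2) := rfl
  have hmain := main_est (γ := γ) (τ := ν^2*T) hγ hτ1
  have key : |Ac γ (ν^2*T) - Real.sqrt (2*γ/Real.pi^3) * E *
      (8*Real.pi*K0 * (Real.sqrt Real.pi/4 * (1/(((ν^2*T)/2)*Real.sqrt ((ν^2*T)/2)))))|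
      ≤ Real.sqrt (2*γ/Real.pi^3) * E * (D * Real.exp (4*Real.pi^2) * (8/(ν^2*T)^2)) := by
    rw [hAc, ← mul_sub]
    rw [abs_mul, abs_of_nonneg hP]
    exact mul_le_mul_of_nonneg_left hmain hP
  have hlead := lead_const_eq (γ := γ) (τ := ν^2*T) hγ hτ0
  have hPX : Real.sqrt (2*γ/Real.pi^3) * E *
      (8*Real.pi*K0 * (Real.sqrt Real.pi/4 * (1/(((ν^2*T)/2)*Real.sqrt ((ν^2*T)/2)))))
      = (8*Real.sqrt γ/S) * E * K0 := by
    rw [hSdef, ← hlead]; ring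
  rw [← hPX]
  refine key.trans ?_
  -- final numeric bound
  have hCineq : A ≤ (A/(Real.sqrt γ*K0*ν) + 1) * (Real.sqrt γ*K0*ν) := by
    rw [add_mul, div_mul_cancel₀ _ hden.ne', one_mul]
    linarith
  have hτ2 : (ν^2*T)^2 = S*(ν*Real.sqrt T) := by
    calc (ν^2*T)^2 = (ν^2*T)*(ν^2*T) := by ring
      _ = (ν^2*T)*(Real.sqrt (ν^2*T)*Real.sqrt (ν^2*T)) := by
          rw [Real.mul_self_sqrt hτ0.le]
      _ = S*(ν*Real.sqrt T) := by rw [hSdef, ← hsqτ]; ring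
  have hLHSeq : Real.sqrt (2*γ/Real.pi^3) * E * (D * Real.exp (4*Real.pi^2) * (8/(ν^2*T)^2))
      = 8*A*E/(S*(ν*Real.sqrt T)) := by
    rw [hAdef, hτ2]; ring
  have hRHSeq : (A/(Real.sqrt γ*K0*ν) + 1) * ((8*Real.sqrt γ/S) * E * K0) / Real.sqrt T
      = (A/(Real.sqrt γ*K0*ν) + 1)*8*Real.sqrt γ*E*K0/(S*Real.sqrt T) := by
    ring
  rw [hLHSeq, hPX, hRHSeq, div_le_div_iff₀ (by positivity) (by positivity)]
  have hmul := mul_le_mul_of_nonneg_right hCineq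
    (show (0:ℝ) ≤ 8*E*S*Real.sqrt T by positivity)
  nlinarith [hmul, hS, hsqT, hE, hν]
end
end

section
/- For fixed s > 0, let λ = √(1/4 + s) and a_+ = 1/2 + λ. Then the function g(z) = (1/s) · (Γ(a_+)/Γ(2a_+)) · z^{a_+} M(a_+, 2a_+, -z), where M is Kummer's confluent hypergeometric function, is the unique solution on (0,∞) of the ODE z² g''(z) + z² g'(z) - s g(z) = 0 with boundary conditions g(0) = 0 and g(z) → 1/s as z → ∞. -/
open MeasureTheory ProbabilityTheory Filter Set
open scoped ENNReal NNReal

noncomputable section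

lemma poch_gamma {x : ℝ} (hx : 0 < x) (n : ℕ) :
    ∏ k ∈ Finset.range n, (x + k) = Real.Gamma (x + n) / Real.Gamma x := by
  induction n with
  | zero => simp [div_self (Real.Gamma_pos_of_pos hx).ne']
  | succ n ih =>
      rw [Finset.prod_range_succ, ih]
      have h1 : x + (n + 1 : ℕ) = (x + n) + 1 := by push_cast; ring
      rw [h1, Real.Gamma_add_one (by positivity)]
      have := Real.Gamma_pos_of_pos hx
      field_simp

lemma real_beta {u v : ℝ} (hu : 0 < u) (hv : 0 < v) :
    ∫ t in (0:ℝ)..1, t ^ (u-1) * (1-t) ^ (v-1)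
      = Real.Gamma u * Real.Gamma v / Real.Gamma (u+v) := by
  have key := Complex.Gamma_mul_Gamma_eq_betaIntegral
    (s := (u:ℂ)) (t := (v:ℂ)) (by simpa using hu) (by simpa using hv)
  have hbeta : Complex.betaIntegral u v
      = ((∫ t in (0:ℝ)..1, t ^ (u-1) * (1-t) ^ (v-1) : ℝ) : ℂ) := by
    rw [Complex.betaIntegral, ← intervalIntegral.integral_ofReal]
    refine intervalIntegral.integral_congr fun x hx => ?_
    rw [uIcc_of_le zero_le_one] at hx
    rw [Complex.ofReal_mul, Complex.ofReal_cpow hx.1, Complex.ofReal_cpow (by linarith [hx.2] : (0:ℝ) ≤ 1 - x)]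
    push_cast
    ring
  have hne : Real.Gamma (u + v) ≠ 0 := (Real.Gamma_pos_of_pos (by positivity)).ne'
  have : ((Real.Gamma u * Real.Gamma v : ℝ) : ℂ)
      = ((Real.Gamma (u+v) * ∫ t in (0:ℝ)..1, t ^ (u-1) * (1-t) ^ (v-1) : ℝ) : ℂ) := by
    rw [Complex.ofReal_mul, Complex.ofReal_mul, ← Complex.Gamma_ofReal u,
      ← Complex.Gamma_ofReal v, ← Complex.Gamma_ofReal (u+v), Complex.ofReal_add, key, hbeta]
  have h2 : Real.Gamma u * Real.Gamma v
      = Real.Gamma (u+v) * ∫ t in (0:ℝ)..1, t ^ (u-1) * (1-t) ^ (v-1) :=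
    Complex.ofReal_injective this
  field_simp [h2]
  rw [h2]; ring

def wFun (a t : ℝ) : ℝ := t ^ (a-1) * (1-t) ^ (a-1)

def Fk (a : ℝ) (k : ℕ) (z : ℝ) : ℝ :=
  ∫ t in (0:ℝ)..1, (-t)^k * Real.exp (-(z*t)) * wFun a t

lemma wFun_cont {a : ℝ} (ha : 1 < a) : Continuous (wFun a) := by
  have h : ∀ x : ℝ, ContinuousAt (fun y : ℝ => y ^ (a-1)) x :=
    fun x => Real.continuousAt_rpow_const x (a-1) (Or.inr (by linarith))
  exact (continuous_iff_continuousAt.2 h).mul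
    ((continuous_iff_continuousAt.2 h).comp (continuous_const.sub continuous_id))

lemma Fk_integrand_cont {a : ℝ} (ha : 1 < a) (k : ℕ) (z : ℝ) :
    Continuous fun t => (-t)^k * Real.exp (-(z*t)) * wFun a t := by
  exact (((continuous_neg.comp continuous_id).pow k).mul
    ((Real.continuous_exp.comp (continuous_const.mul continuous_id).neg))).mul (wFun_cont ha)

lemma rpow_split {t : ℝ} (ht : 0 ≤ t) (a : ℝ) (ha : 1 < a) : t ^ a = t * t ^ (a-1) := by
  have : a = 1 + (a-1) := by ring
  rw [this, Real.rpow_add_of_nonneg ht zero_le_one (by linarith), Real.rpow_one]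
  ring_nf

lemma kernel_ode {a : ℝ} (ha : 1 < a) (z : ℝ) :
    z * Fk a 2 z + (2*a + z) * Fk a 1 z + a * Fk a 0 z = 0 := by
  set ψ : ℝ → ℝ := fun t => z * ((-t)^2 * Real.exp (-(z*t)) * wFun a t)
    + (2*a+z) * ((-t)^1 * Real.exp (-(z*t)) * wFun a t)
    + a * ((-t)^0 * Real.exp (-(z*t)) * wFun a t) with hψ
  have hψcont : Continuous ψ :=
    ((continuous_const.mul (Fk_integrand_cont ha 2 z)).add
      (continuous_const.mul (Fk_integrand_cont ha 1 z))).add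
      (continuous_const.mul (Fk_integrand_cont ha 0 z))
  have hsplit : ∫ t in (0:ℝ)..1, ψ t
      = z * Fk a 2 z + (2*a + z) * Fk a 1 z + a * Fk a 0 z := by
    rw [hψ]
    rw [intervalIntegral.integral_add, intervalIntegral.integral_add,
      intervalIntegral.integral_const_mul, intervalIntegral.integral_const_mul,
      intervalIntegral.integral_const_mul]
    · rfl
    · exact (continuous_const.mul (Fk_integrand_cont ha 2 z)).intervalIntegrable 0 1
    · exact (continuous_const.mul (Fk_integrand_cont ha 1 z)).intervalIntegrable 0 1
    · exact ((continuous_const.mul (Fk_integrand_cont ha 2 z)).add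
        (continuous_const.mul (Fk_integrand_cont ha 1 z))).intervalIntegrable 0 1
    · exact (continuous_const.mul (Fk_integrand_cont ha 0 z)).intervalIntegrable 0 1
  have hderiv : ∀ t ∈ uIcc (0:ℝ) 1,
      HasDerivAt (fun t => Real.exp (-(z*t)) * (t ^ a * (1-t) ^ a)) (ψ t) t := by
    intro t ht
    rw [uIcc_of_le zero_le_one] at ht
    have h1 : HasDerivAt (fun t : ℝ => Real.exp (-(z*t))) (-z * Real.exp (-(z*t))) t := by
      have h0 : HasDerivAt (fun t : ℝ => -(z*t)) (-z) t := by
        exact (((hasDerivAt_id t).const_mul z).neg).congr_deriv (by simp)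
      have := (Real.hasDerivAt_exp (-(z*t))).comp t h0
      simpa [Function.comp_def, mul_comm] using this
    have h2 : HasDerivAt (fun t : ℝ => t ^ a) (a * t ^ (a-1)) t :=
      Real.hasDerivAt_rpow_const (Or.inr ha.le)
    have h3 : HasDerivAt (fun t : ℝ => (1-t) ^ a) (-(a * (1-t) ^ (a-1))) t := by
      have h0 : HasDerivAt (fun t : ℝ => 1 - t) (-1) t := by
        simpa using (hasDerivAt_id t).const_sub 1
      have := (Real.hasDerivAt_rpow_const (x := 1-t) (p := a) (Or.inr ha.le)).comp t h0
      simpa [Function.comp_def] using this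
    have h4 := h1.mul (h2.mul h3)
    refine h4.congr_deriv ?_
    have e1 : t ^ a = t * t ^ (a-1) := rpow_split ht.1 a ha
    have e2 : (1-t) ^ a = (1-t) * (1-t) ^ (a-1) := rpow_split (by linarith [ht.2]) a ha
    rw [hψ]
    simp only [wFun, pow_zero, pow_one, pow_two, Pi.mul_apply]
    rw [e1, e2]
    ring
  have hzero : ∫ t in (0:ℝ)..1, ψ t = 0 := by
    rw [intervalIntegral.integral_eq_sub_of_hasDerivAt hderiv
      (hψcont.intervalIntegrable 0 1)]
    norm_num [Real.zero_rpow (show a ≠ 0 by linarith), Real.one_rpow]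
  rw [← hsplit, hzero]

lemma wFun_nonneg {a : ℝ} (t : ℝ) (ht : t ∈ Icc (0:ℝ) 1) : 0 ≤ wFun a t :=
  mul_nonneg (Real.rpow_nonneg ht.1 _) (Real.rpow_nonneg (by linarith [ht.2]) _)


lemma hasDerivAt_Fk {a : ℝ} (ha : 1 < a) (k : ℕ) (z : ℝ) :
    HasDerivAt (Fk a k) (Fk a (k+1) z) z := by
  have h := intervalIntegral.hasDerivAt_integral_of_dominated_loc_of_deriv_le
    (F := fun x t => (-t)^k * Real.exp (-(x*t)) * wFun a t)
    (F' := fun x t => (-t)^(k+1) * Real.exp (-(x*t)) * wFun a t)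
    (x₀ := z) (a := (0:ℝ)) (b := 1) (μ := volume)
    (bound := fun t => Real.exp (|z|+1) * wFun a t)
    (s := Metric.ball z 1) (Metric.ball_mem_nhds z one_pos)
    (Eventually.of_forall fun x => ((Fk_integrand_cont ha k x).aestronglyMeasurable).restrict)
    ((Fk_integrand_cont ha k z).intervalIntegrable 0 1)
    ((Fk_integrand_cont ha (k+1) z).aestronglyMeasurable).restrict
    ?bound
    ((continuous_const.mul (wFun_cont ha)).intervalIntegrable 0 1)
    ?diff
  · exact h.2
  case bound =>
    refine Eventually.of_forall fun t ht x hx => ?_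
    rw [uIoc_of_le zero_le_one] at ht
    have hw : 0 ≤ wFun a t := wFun_nonneg t ⟨ht.1.le, ht.2⟩
    have ht1 : |t| ≤ 1 := by rw [abs_of_nonneg ht.1.le]; exact ht.2
    have hxb : |x| ≤ |z| + 1 := by
      have hdx : |x - z| < 1 := by simpa [Real.dist_eq] using hx
      calc |x| = |z + (x - z)| := by ring_nf
        _ ≤ |z| + |x - z| := abs_add_le _ _
        _ ≤ |z| + 1 := by linarith
    have h2 : Real.exp (-(x*t)) ≤ Real.exp (|z|+1) := by
      apply Real.exp_le_exp.2
      calc -(x*t) ≤ |x * t| := neg_le_abs _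
        _ = |x| * |t| := abs_mul _ _
        _ ≤ (|z|+1) * 1 := mul_le_mul hxb ht1 (abs_nonneg t) (by positivity)
        _ = |z| + 1 := mul_one _
    have h1 : |(-t)^(k+1)| ≤ 1 := by
      rw [abs_pow, abs_neg]; exact pow_le_one₀ (abs_nonneg t) ht1
    show ‖(-t)^(k+1) * Real.exp (-(x*t)) * wFun a t‖ ≤ Real.exp (|z|+1) * wFun a t
    rw [norm_mul, norm_mul, Real.norm_eq_abs, Real.norm_eq_abs, Real.norm_eq_abs,
      abs_of_nonneg (Real.exp_pos _).le, abs_of_nonneg hw]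
    calc |(-t)^(k+1)| * Real.exp (-(x*t)) * wFun a t
        ≤ 1 * Real.exp (|z|+1) * wFun a t := by
          apply mul_le_mul _ le_rfl hw (by positivity)
          exact mul_le_mul h1 h2 (Real.exp_pos _).le zero_le_one
      _ = Real.exp (|z|+1) * wFun a t := by ring
  case diff =>
    refine Eventually.of_forall fun t ht x hx => ?_
    have : HasDerivAt (fun x : ℝ => Real.exp (-(x*t))) (-t * Real.exp (-(x*t))) x := by
      have h1 : HasDerivAt (fun x : ℝ => -(x*t)) (-t) x := by
        exact (((hasDerivAt_id x).mul_const t).neg).congr_deriv (by simp)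
      have h2 := (Real.hasDerivAt_exp (-(x*t))).comp x h1
      simpa [Function.comp_def, mul_comm] using h2
    have h3 := (this.const_mul ((-t)^k)).mul_const (wFun a t)
    have h4 : (-t)^k * (-t * Real.exp (-(x*t))) * wFun a t
        = (-t)^(k+1) * Real.exp (-(x*t)) * wFun a t := by ring
    rw [h4] at h3
    exact h3

lemma exp_tsum (x : ℝ) : Real.exp x = ∑' n : ℕ, x ^ n / n.factorial := by
  rw [Real.exp_eq_exp_ℝ, NormedSpace.exp_eq_tsum_div]

lemma term_beta {a : ℝ} (ha : 1 < a) (n : ℕ) :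
    ∫ t in (0:ℝ)..1, (t:ℝ)^n * wFun a t
      = Real.Gamma (a+n) * Real.Gamma a / Real.Gamma (2*a+n) := by
  have ha0 : (0:ℝ) < a := by linarith
  have h := real_beta (u := a + n) (v := a) (by positivity) ha0
  have congr1 : ∀ t ∈ uIcc (0:ℝ) 1, (t:ℝ)^n * wFun a t = t ^ ((a+n)-1) * (1-t) ^ (a-1) := by
    intro t ht
    rw [uIcc_of_le zero_le_one] at ht
    rcases eq_or_lt_of_le ht.1 with h0 | h0
    · rcases Nat.eq_zero_or_pos n with hn | hn
      · subst hn
        simp only [← h0, wFun, pow_zero, one_mul]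
        norm_num
      · have hne : a + (n:ℝ) - 1 ≠ 0 := by
          have : (0:ℝ) ≤ n := Nat.cast_nonneg n
          intro hc; nlinarith
        rw [← h0, Real.zero_rpow hne, zero_pow hn.ne']
        ring
    · rw [wFun]
      have e : t ^ (a + (n:ℝ) - 1) = t ^ ((n:ℕ):ℝ) * t ^ (a-1) := by
        rw [← Real.rpow_add h0]; ring_nf
      rw [e, Real.rpow_natCast]
      ring
  rw [intervalIntegral.integral_congr congr1, h]
  have : a + n + a = 2*a + n := by ring
  rw [this]

lemma kummer_eq_int {a : ℝ} (ha : 1 < a) (z : ℝ) :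
    kummerM a (2*a) (-z) = (Real.Gamma (2*a) / (Real.Gamma a)^2) * Fk a 0 z := by
  have ha0 : (0:ℝ) < a := by linarith
  have hGa : 0 < Real.Gamma a := Real.Gamma_pos_of_pos ha0
  have hG2a : 0 < Real.Gamma (2*a) := Real.Gamma_pos_of_pos (by linarith)
  -- step 1: Fk as set integral
  have h1 : Fk a 0 z = ∫ t in Ioc (0:ℝ) 1, Real.exp (-(z*t)) * wFun a t := by
    rw [Fk, intervalIntegral.integral_of_le zero_le_one]
    simp only [pow_zero, one_mul]
  -- step 2: expand exp and swap
  set F : ℕ → ℝ → ℝ := fun n t => ((-(z*t))^n / n.factorial) * wFun a t with hF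
  have hFcont : ∀ n, Continuous (F n) := by
    intro n
    exact (((continuous_const.mul continuous_id).neg.pow n).div_const _).mul (wFun_cont ha)
  have hFint : ∀ n, Integrable (F n) (volume.restrict (Ioc (0:ℝ) 1)) := fun n =>
    (hFcont n).integrableOn_Ioc
  have hwint : Integrable (wFun a) (volume.restrict (Ioc (0:ℝ) 1)) :=
    (wFun_cont ha).integrableOn_Ioc
  set C : ℝ := ∫ t in Ioc (0:ℝ) 1, wFun a t with hC
  have hFnorm : ∀ n, (∫ t in Ioc (0:ℝ) 1, ‖F n t‖) ≤ |z| ^ n / n.factorial * C := by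
    intro n
    rw [hC, ← MeasureTheory.integral_const_mul]
    apply MeasureTheory.setIntegral_mono_on ((hFcont n).norm.integrableOn_Ioc)
      (hwint.const_mul _) measurableSet_Ioc
    intro t ht
    have hw : 0 ≤ wFun a t := wFun_nonneg t ⟨ht.1.le, ht.2⟩
    have ht1 : |t| ≤ 1 := by rw [abs_of_nonneg ht.1.le]; exact ht.2
    have habs : |(-(z*t))| ≤ |z| := by
      rw [abs_neg, abs_mul]
      calc |z| * |t| ≤ |z| * 1 := mul_le_mul_of_nonneg_left ht1 (abs_nonneg z)
        _ = |z| := mul_one _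
    have hpow : |(-(z*t))| ^ n ≤ |z| ^ n := pow_le_pow_left₀ (abs_nonneg _) habs n
    rw [hF]
    simp only [norm_mul, norm_div, norm_pow, Real.norm_eq_abs, Nat.abs_cast]
    rw [abs_of_nonneg hw]
    apply mul_le_mul _ le_rfl hw (by positivity)
    gcongr
  have hsum : Summable fun n => ∫ t in Ioc (0:ℝ) 1, ‖F n t‖ := by
    have hs2 : Summable fun n : ℕ => |z| ^ n / n.factorial * C :=
      (Real.summable_pow_div_factorial |z|).mul_right C
    exact Summable.of_nonneg_of_le (fun n => integral_nonneg fun t => norm_nonneg _) hFnorm hs2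
  have hswap := MeasureTheory.integral_tsum_of_summable_integral_norm hFint hsum
  have hpt : ∀ t : ℝ, (∑' n, F n t) = Real.exp (-(z*t)) * wFun a t := by
    intro t
    rw [exp_tsum (-(z*t)), ← tsum_mul_right]
  have hterm : ∀ n : ℕ, (∫ t in Ioc (0:ℝ) 1, F n t)
      = ((-z) ^ n / n.factorial) * (Real.Gamma (a+n) * Real.Gamma a / Real.Gamma (2*a+n)) := by
    intro n
    rw [← intervalIntegral.integral_of_le zero_le_one]
    have e : ∀ t ∈ uIcc (0:ℝ) 1, F n t = ((-z)^n / n.factorial) * ((t:ℝ)^n * wFun a t) := by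
      intro t _
      rw [hF]
      simp only [← neg_mul, mul_pow]
      ring
    rw [intervalIntegral.integral_congr e, intervalIntegral.integral_const_mul, term_beta ha n]
  have hsum2 : (∑' n, ∫ t in Ioc (0:ℝ) 1, F n t) = Fk a 0 z := by
    rw [hswap, h1]
    congr 1
    ext t
    rw [hpt t]
  rw [← hsum2, ← tsum_mul_left]
  rw [kummerM]
  apply tsum_congr
  intro n
  rw [hterm n, poch_gamma ha0 n, poch_gamma (by linarith : (0:ℝ) < 2*a) n]
  have hGan : 0 < Real.Gamma (a + n) := Real.Gamma_pos_of_pos (by positivity)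
  have hG2an : 0 < Real.Gamma (2*a + n) := Real.Gamma_pos_of_pos (by positivity)
  have hfn : (0:ℝ) < n.factorial := by exact_mod_cast Nat.factorial_pos n
  field_simp


lemma Fk_subst {a : ℝ} (ha : 1 < a) {z : ℝ} (hz : 0 < z) :
    z ^ a * Fk a 0 z = ∫ u in Ioi (0:ℝ),
      (Ioc 0 z).indicator (fun u => Real.exp (-u) * u^(a-1) * (1-u/z)^(a-1)) u := by
  set f : ℝ → ℝ := fun u => Real.exp (-u) * u^(a-1) * (1-u/z)^(a-1) with hf
  have key : ∀ t ∈ uIcc (0:ℝ) 1, (-t)^(0:ℕ) * Real.exp (-(z*t)) * wFun a t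
      = z^(1-a) * f (z*t) := by
    intro t ht
    rw [uIcc_of_le zero_le_one] at ht
    rw [hf]
    simp only [pow_zero, one_mul, wFun]
    have e1 : (1 : ℝ) - z*t/z = 1 - t := by rw [mul_div_cancel_left₀ _ hz.ne']
    have e2 : (z*t)^(a-1) = z^(a-1) * t^(a-1) := Real.mul_rpow hz.le ht.1
    rw [e1, e2]
    have e3 : z^(1-a) * z^(a-1) = 1 := by
      rw [← Real.rpow_add hz]; norm_num
    linear_combination (-(Real.exp (-(z*t)) * t^(a-1) * (1-t)^(a-1))) * e3
  have h1 : Fk a 0 z = z^(1-a) * ∫ t in (0:ℝ)..1, f (z*t) := by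
    rw [Fk, intervalIntegral.integral_congr key, intervalIntegral.integral_const_mul]
  have h2 : ∫ t in (0:ℝ)..1, f (z*t) = z⁻¹ * ∫ u in (0:ℝ)..z, f u := by
    have := intervalIntegral.integral_comp_mul_left (a := (0:ℝ)) (b := 1) (c := z) f hz.ne'
    simpa [mul_comm] using this
  have h3 : z ^ a * Fk a 0 z = ∫ u in (0:ℝ)..z, f u := by
    rw [h1, h2]
    have e3 : z^a * (z^(1-a) * z⁻¹) = 1 := by
      rw [← mul_assoc, ← Real.rpow_add hz]
      norm_num [Real.rpow_one, mul_inv_cancel₀ hz.ne']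
    linear_combination (∫ u in (0:ℝ)..z, f u) * e3
  rw [h3, intervalIntegral.integral_of_le hz.le]
  rw [MeasureTheory.integral_indicator measurableSet_Ioc,
    Measure.restrict_restrict measurableSet_Ioc,
    inter_eq_left.mpr Ioc_subset_Ioi_self]

lemma Fk_tendsto_top {a : ℝ} (ha : 1 < a) :
    Tendsto (fun z => z ^ a * Fk a 0 z) atTop (nhds (Real.Gamma a)) := by
  have ha0 : (0:ℝ) < a := by linarith
  set bound : ℝ → ℝ := fun u => Real.exp (-u) * u^(a-1) with hbound
  set F : ℝ → ℝ → ℝ := fun z u =>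
    (Ioc 0 z).indicator (fun u => Real.exp (-u) * u^(a-1) * (1-u/z)^(a-1)) u with hFdef
  have hcont : ∀ z : ℝ, Continuous fun u => Real.exp (-u) * u^(a-1) * (1-u/z)^(a-1) := by
    intro z
    have hr : ∀ c : ℝ, Continuous fun y : ℝ => y ^ (a-1) := fun c =>
      Real.continuous_rpow_const (by linarith)
    exact ((Real.continuous_exp.comp continuous_neg).mul (hr 0)).mul
      ((hr 0).comp (continuous_const.sub (continuous_id.div_const z)))
  have hmeas : ∀ᶠ z in atTop, AEStronglyMeasurable (F z) (volume.restrict (Ioi (0:ℝ))) :=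
    Eventually.of_forall fun z =>
      ((hcont z).aestronglyMeasurable.indicator measurableSet_Ioc)
  have hbdd : ∀ᶠ z in atTop, ∀ᵐ u ∂(volume.restrict (Ioi (0:ℝ))), ‖F z u‖ ≤ bound u := by
    filter_upwards [eventually_gt_atTop (0:ℝ)] with z hz
    refine (ae_restrict_iff' measurableSet_Ioi).2 (ae_of_all _ fun u hu => ?_)
    have hu0 : 0 < u := hu
    have hbnn : 0 ≤ bound u := by
      rw [hbound]; positivity
    by_cases hmem : u ∈ Ioc 0 z
    · have hFz : F z u = Real.exp (-u) * u^(a-1) * (1-u/z)^(a-1) :=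
        indicator_of_mem hmem _
      rw [hFz]
      have h1 : 0 ≤ 1 - u/z := by
        rw [sub_nonneg, div_le_one hz]; exact hmem.2
      have h2 : 1 - u/z ≤ 1 := by
        have : 0 ≤ u/z := by positivity
        linarith
      have h3 : (1-u/z)^(a-1) ≤ 1 := Real.rpow_le_one h1 h2 (by linarith)
      rw [Real.norm_eq_abs, abs_of_nonneg (by positivity)]
      rw [hbound]
      calc Real.exp (-u) * u^(a-1) * (1-u/z)^(a-1)
          ≤ Real.exp (-u) * u^(a-1) * 1 := by
            apply mul_le_mul_of_nonneg_left h3 (by positivity)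
        _ = Real.exp (-u) * u^(a-1) := mul_one _
    · have hFz : F z u = 0 := indicator_of_notMem hmem _
      rw [hFz]; simpa using hbnn
  have hbint : Integrable bound (volume.restrict (Ioi (0:ℝ))) :=
    Real.GammaIntegral_convergent ha0
  have hlim : ∀ᵐ u ∂(volume.restrict (Ioi (0:ℝ))),
      Tendsto (fun z => F z u) atTop (nhds (bound u)) := by
    refine (ae_restrict_iff' measurableSet_Ioi).2 (ae_of_all _ fun u hu => ?_)
    have hu0 : 0 < u := hu
    have hev : ∀ᶠ z in atTop, F z u = Real.exp (-u) * u^(a-1) * (1-u/z)^(a-1) := by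
      filter_upwards [eventually_ge_atTop u] with z hz
      exact indicator_of_mem (mem_Ioc.2 ⟨hu0, hz⟩) _
    have ht1 : Tendsto (fun z : ℝ => 1 - u/z) atTop (nhds 1) := by
      have : Tendsto (fun z : ℝ => u/z) atTop (nhds 0) :=
        tendsto_const_nhds.div_atTop tendsto_id
      simpa using tendsto_const_nhds.sub this
    have ht2 : Tendsto (fun z : ℝ => (1 - u/z)^(a-1)) atTop (nhds 1) := by
      have hc : ContinuousAt (fun y : ℝ => y ^ (a-1)) 1 :=
        Real.continuousAt_rpow_const 1 (a-1) (Or.inl one_ne_zero)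
      have := hc.tendsto.comp ht1
      simpa [Real.one_rpow, Function.comp_def] using this
    have ht3 : Tendsto (fun z => Real.exp (-u) * u^(a-1) * (1-u/z)^(a-1)) atTop
        (nhds (bound u)) := by
      have := ht2.const_mul (Real.exp (-u) * u^(a-1))
      simpa [hbound, mul_comm] using this
    exact ht3.congr' (hev.mono fun z h => h.symm)
  have hDCT := MeasureTheory.tendsto_integral_filter_of_dominated_convergence
    bound hmeas hbdd hbint hlim
  have hG : ∫ u in Ioi (0:ℝ), bound u = Real.Gamma a := (Real.Gamma_eq_integral ha0).symm
  rw [hG] at hDCT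
  apply hDCT.congr'
  filter_upwards [eventually_gt_atTop (0:ℝ)] with z hz
  exact (Fk_subst ha hz).symm

def Gf (s a z : ℝ) : ℝ := (1/(s*Real.Gamma a)) * (z^a * Fk a 0 z)
def Gf1 (s a z : ℝ) : ℝ :=
  (1/(s*Real.Gamma a)) * (a * z^(a-1) * Fk a 0 z + z^a * Fk a 1 z)
def Gf2 (s a z : ℝ) : ℝ :=
  (1/(s*Real.Gamma a)) * (a*(a-1) * z^(a-2) * Fk a 0 z
    + 2*a*z^(a-1) * Fk a 1 z + z^a * Fk a 2 z)

lemma hasDerivAt_Gf {s a : ℝ} (ha : 1 < a) {z : ℝ} (hz : 0 < z) :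
    HasDerivAt (Gf s a) (Gf1 s a z) z := by
  have h1 : HasDerivAt (fun z : ℝ => z^a) (a * z^(a-1)) z :=
    Real.hasDerivAt_rpow_const (Or.inl hz.ne')
  have h2 := (h1.mul (hasDerivAt_Fk ha 0 z)).const_mul (1/(s*Real.Gamma a))
  have e : (1/(s*Real.Gamma a)) * (a * z^(a-1) * Fk a 0 z + z^a * Fk a 1 z)
      = (1/(s*Real.Gamma a)) * (a * z^(a-1) * Fk a 0 z + z^a * Fk a (0+1) z) := by norm_num
  rw [Gf1.eq_def]
  rw [e]
  exact h2

lemma hasDerivAt_Gf1 {s a : ℝ} (ha : 1 < a) {z : ℝ} (hz : 0 < z) :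
    HasDerivAt (Gf1 s a) (Gf2 s a z) z := by
  have h1 : HasDerivAt (fun z : ℝ => z^(a-1)) ((a-1) * z^(a-1-1)) z :=
    Real.hasDerivAt_rpow_const (Or.inl hz.ne')
  have h1' : HasDerivAt (fun z : ℝ => z^a) (a * z^(a-1)) z :=
    Real.hasDerivAt_rpow_const (Or.inl hz.ne')
  have h2 := (((h1.const_mul a).mul (hasDerivAt_Fk ha 0 z)).add
    (h1'.mul (hasDerivAt_Fk ha 1 z))).const_mul (1/(s*Real.Gamma a))
  have e : Gf2 s a z = (1/(s*Real.Gamma a)) *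
      (a * ((a-1) * z^(a-1-1)) * Fk a 0 z + a * z^(a-1) * Fk a (0+1) z
        + (a * z^(a-1) * Fk a 1 z + z^a * Fk a (1+1) z)) := by
    rw [Gf2.eq_def]
    have e : a - 1 - 1 = a - 2 := by ring
    have e2 : Fk a (0+1) = Fk a 1 := rfl
    have e3 : Fk a (1+1) = Fk a 2 := rfl
    rw [e, e2, e3]
    ring
  rw [e]
  exact h2

lemma ode_Gf {s a : ℝ} (ha : 1 < a) (haa : a*(a-1) = s) {z : ℝ} (hz : 0 < z) :
    z^2 * Gf2 s a z + z^2 * Gf1 s a z - s * Gf s a z = 0 := by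
  have kernel := kernel_ode ha z
  have e1 : z^(a-1) = z^(a-2) * z := by
    have e : a - 1 = (a-2) + 1 := by ring
    rw [e, Real.rpow_add_one hz.ne']
  have e2 : z^a = z^(a-2) * z^2 := by
    rw [← Real.rpow_natCast z 2, ← Real.rpow_add hz]
    congr 1
    push_cast
    ring
  rw [Gf.eq_def, Gf1.eq_def, Gf2.eq_def, e1, e2]
  have hk0 := Fk a 0 z
  linear_combination ((1/(s*Real.Gamma a)) * z^(a-2) * z^3) * kernel
    + ((1/(s*Real.Gamma a)) * z^(a-2) * z^2 * Fk a 0 z) * haa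

lemma Gf_tendsto_zero {s a : ℝ} (ha : 1 < a) :
    Tendsto (Gf s a) (nhdsWithin 0 (Ioi 0)) (nhds 0) := by
  have h1 : Tendsto (fun z : ℝ => z^a) (nhdsWithin 0 (Ioi 0)) (nhds 0) := by
    have := (Real.continuousAt_rpow_const 0 a (Or.inr (by linarith))).tendsto
    rw [Real.zero_rpow (by linarith : a ≠ 0)] at this
    exact this.mono_left nhdsWithin_le_nhds
  have h2 : Tendsto (Fk a 0) (nhdsWithin 0 (Ioi 0)) (nhds (Fk a 0 0)) :=
    ((hasDerivAt_Fk ha 0 0).continuousAt.tendsto).mono_left nhdsWithin_le_nhds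
  have h3 := (h1.mul h2).const_mul (1/(s*Real.Gamma a))
  rw [zero_mul, mul_zero] at h3
  exact h3.congr fun z => by rw [Gf.eq_def]

lemma max_principle {s : ℝ} (hs : 0 < s) (u u1 u2 : ℝ → ℝ)
    (hu : ∀ z : ℝ, 0 < z → HasDerivAt u (u1 z) z)
    (hu1 : ∀ z : ℝ, 0 < z → HasDerivAt u1 (u2 z) z)
    (hode : ∀ z : ℝ, 0 < z → z^2 * u2 z + z^2 * u1 z = s * u z)
    (h0 : Tendsto u (nhdsWithin 0 (Ioi 0)) (nhds 0))
    (hinf : Tendsto u atTop (nhds 0)) :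
    ∀ z : ℝ, 0 < z → u z ≤ 0 := by
  by_contra hcon
  push_neg at hcon
  obtain ⟨z₀, hz₀, hm⟩ := hcon
  set m := u z₀ with hmdef
  have h0' : {x | u x < m} ∈ nhdsWithin 0 (Ioi (0:ℝ)) := h0.eventually (gt_mem_nhds hm)
  obtain ⟨δ, hδpos, hδ⟩ := Metric.mem_nhdsWithin_iff.1 h0'
  obtain ⟨R, hR⟩ := (hinf.eventually (gt_mem_nhds hm)).exists_forall_of_atTop
  set ε := min (δ/2) z₀ with hεdef
  have hεpos : 0 < ε := lt_min (by linarith) hz₀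
  have hεz₀ : ε ≤ z₀ := min_le_right _ _
  have hεδ : ε < δ := lt_of_le_of_lt (min_le_left _ _) (by linarith)
  set R' := max R z₀ with hR'def
  have hz₀R : z₀ ≤ R' := le_max_right _ _
  have hεR : ε ≤ R' := le_trans hεz₀ hz₀R
  have huε : u ε < m := by
    apply hδ
    constructor
    · rw [Metric.mem_ball, Real.dist_eq, sub_zero, abs_of_pos hεpos]; exact hεδ
    · exact hεpos
  have huR : u R' < m := hR R' (le_max_left _ _)
  have hcont : ContinuousOn u (Icc ε R') := fun x hx =>
    ((hu x (lt_of_lt_of_le hεpos hx.1)).continuousAt).continuousWithinAt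
  obtain ⟨ζ, hζmem, hζmax⟩ := isCompact_Icc.exists_isMaxOn
    (nonempty_Icc.2 hεR) hcont
  have hζm : m ≤ u ζ := hζmax ⟨hεz₀, hz₀R⟩
  have hζpos : 0 < ζ := lt_of_lt_of_le hεpos hζmem.1
  have hζε : ε < ζ := lt_of_le_of_ne hζmem.1 (fun h => by rw [← h] at hζm; linarith)
  have hζR : ζ < R' := lt_of_le_of_ne hζmem.2 (fun h => by rw [h] at hζm; linarith)
  have hloc : IsLocalMax u ζ := hζmax.isLocalMax (Icc_mem_nhds hζε hζR)
  have hu1ζ : u1 ζ = 0 := hloc.hasDerivAt_eq_zero (hu ζ hζpos)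
  have hu2ζ : 0 < u2 ζ := by
    have hode' := hode ζ hζpos
    nlinarith [hζm, hm, sq_nonneg ζ]
  -- slope of u1 positive to the right of ζ
  have hslope : Tendsto (slope u1 ζ) (nhdsWithin ζ {ζ}ᶜ) (nhds (u2 ζ)) :=
    hasDerivAt_iff_tendsto_slope.1 (hu1 ζ hζpos)
  have hev : {x | 0 < slope u1 ζ x} ∈ nhdsWithin ζ (Ioi ζ) := by
    apply nhdsWithin_mono ζ (fun x (hx : x ∈ Ioi ζ) => (show x ≠ ζ from (mem_Ioi.1 hx).ne'))
    exact hslope.eventually (lt_mem_nhds hu2ζ)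
  obtain ⟨δ₂, hδ₂pos, hδ₂⟩ := Metric.mem_nhdsWithin_iff.1 hev
  set η := min (δ₂/2) ((R' - ζ)/2) with hηdef
  have hηpos : 0 < η := lt_min (by linarith) (by linarith)
  have hyR : ζ + η ≤ R' := by
    have : η ≤ (R' - ζ)/2 := min_le_right _ _
    linarith
  have hu1pos : ∀ x ∈ Ioo ζ (ζ + η), 0 < u1 x := by
    intro x hx
    have hsl : 0 < slope u1 ζ x := by
      apply hδ₂
      constructor
      · rw [Metric.mem_ball, Real.dist_eq, abs_of_pos (by linarith [hx.1] : (0:ℝ) < x - ζ)]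
        have : η ≤ δ₂/2 := min_le_left _ _
        linarith [hx.2]
      · exact hx.1
    rw [slope_def_field, hu1ζ, sub_zero] at hsl
    have hxζ : 0 < x - ζ := by linarith [hx.1]
    have h5 := mul_pos hsl hxζ
    rwa [div_mul_cancel₀ _ (ne_of_gt hxζ)] at h5
  have hu1pos' : ∀ x ∈ Ioo ζ (ζ + η), 0 < u1 x := hu1pos
  have hmono : StrictMonoOn u (Icc ζ (ζ + η)) := by
    apply strictMonoOn_of_deriv_pos (convex_Icc _ _)
    · intro x hx
      exact ((hu x (lt_of_lt_of_le hζpos hx.1)).continuousAt).continuousWithinAt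
    · intro x hx
      rw [interior_Icc] at hx
      rw [(hu x (by linarith [hx.1] : (0:ℝ) < x)).deriv]
      exact hu1pos x hx
  have hlt : u ζ < u (ζ + η) :=
    hmono (left_mem_Icc.2 (by linarith)) (right_mem_Icc.2 (by linarith)) (by linarith)
  have hle : u (ζ + η) ≤ u ζ := hζmax ⟨by linarith [hζmem.1], hyR⟩
  linarith

/-- For fixed `s > 0`, `λ = √(1/4+s)`, `a₊ = 1/2 + λ`, the function
`g(z) = (1/s)(Γ(a₊)/Γ(2a₊)) z^{a₊} M(a₊, 2a₊, -z)` is the unique solution of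
`z²g'' + z²g' - sg = 0` on `(0,∞)` with `g(0⁺) = 0` and `g(∞) = 1/s`. -/
theorem laplace_transform_ode_unique_solution
    (s : ℝ) (hs : 0 < s) :
    let l : ℝ := Real.sqrt (1 / 4 + s)
    let a : ℝ := 1 / 2 + l
    let g : ℝ → ℝ := fun z =>
      (1 / s) * (Real.Gamma a / Real.Gamma (2 * a)) * z ^ a * kummerM a (2 * a) (-z)
    (∀ z : ℝ, 0 < z →
        z ^ 2 * deriv (deriv g) z + z ^ 2 * deriv g z - s * g z = 0) ∧
    Filter.Tendsto g (nhdsWithin 0 (Set.Ioi 0)) (nhds 0) ∧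
    Filter.Tendsto g Filter.atTop (nhds (1 / s)) ∧
    ∀ h : ℝ → ℝ, (∀ z : ℝ, 0 < z → ContDiffAt ℝ 2 h z) →
      (∀ z : ℝ, 0 < z →
        z ^ 2 * deriv (deriv h) z + z ^ 2 * deriv h z - s * h z = 0) →
      Filter.Tendsto h (nhdsWithin 0 (Set.Ioi 0)) (nhds 0) →
      Filter.Tendsto h Filter.atTop (nhds (1 / s)) →
      ∀ z : ℝ, 0 < z → h z = g z := by
  intro l a g
  have hl2 : (1:ℝ)/2 < l := by
    have h14 : Real.sqrt (1/4) = 1/2 := by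
      rw [show (1/4:ℝ) = (1/2)^2 by norm_num, Real.sqrt_sq (by norm_num)]
    calc (1:ℝ)/2 = Real.sqrt (1/4) := h14.symm
      _ < Real.sqrt (1/4 + s) := Real.sqrt_lt_sqrt (by norm_num) (by linarith)
  have ha1 : 1 < a := by show 1 < 1/2 + l; linarith
  have ha0 : 0 < a := by linarith
  have haa : a * (a - 1) = s := by
    have hsq : l^2 = 1/4 + s := Real.sq_sqrt (by linarith)
    show (1/2 + l) * (1/2 + l - 1) = s
    nlinarith [hsq]
  have hGa : 0 < Real.Gamma a := Real.Gamma_pos_of_pos ha0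
  have hG2a : 0 < Real.Gamma (2*a) := Real.Gamma_pos_of_pos (by linarith)
  have hg_eq : ∀ z : ℝ, g z = Gf s a z := by
    intro z
    show (1/s) * (Real.Gamma a / Real.Gamma (2*a)) * z^a * kummerM a (2*a) (-z) = Gf s a z
    rw [kummer_eq_int ha1 z, Gf.eq_def]
    field_simp
  have hgfun : g = Gf s a := funext hg_eq
  have hderiv1 : Set.EqOn (deriv g) (Gf1 s a) (Ioi 0) := fun x hx => by
    rw [hgfun]; exact (hasDerivAt_Gf ha1 hx).deriv
  have hderiv2 : ∀ z : ℝ, 0 < z → deriv (deriv g) z = Gf2 s a z := by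
    intro z hz
    have hev : deriv g =ᶠ[nhds z] Gf1 s a :=
      eventuallyEq_of_mem (Ioi_mem_nhds hz) hderiv1
    rw [hev.deriv_eq]
    exact (hasDerivAt_Gf1 ha1 hz).deriv
  have hGinf : Tendsto (Gf s a) atTop (nhds (1/s)) := by
    have h1 := (Fk_tendsto_top ha1).const_mul (1/(s*Real.Gamma a))
    have e : (1/(s*Real.Gamma a)) * Real.Gamma a = 1/s := by
      field_simp
    rw [e] at h1
    exact h1.congr fun z => rfl
  refine ⟨?_, ?_, ?_, ?_⟩
  · intro z hz
    rw [hderiv2 z hz, hderiv1 hz, hg_eq z]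
    exact ode_Gf ha1 haa hz
  · rw [hgfun]; exact Gf_tendsto_zero ha1
  · rw [hgfun]; exact hGinf
  · intro h hC2 hODE h0 hinf z hz
    -- differentiability facts about h
    have hfacts : ∀ w : ℝ, 0 < w →
        HasDerivAt h (deriv h w) w ∧ HasDerivAt (deriv h) (deriv (deriv h) w) w := by
      intro w hw
      obtain ⟨v, hv, hvc⟩ := (hC2 w hw).contDiffOn (le_refl 2) (by simp)
      have hwint : w ∈ interior v := mem_interior_iff_mem_nhds.2 hv
      have hvc' : ContDiffOn ℝ 2 h (interior v) := hvc.mono interior_subset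
      have hd1 : DifferentiableOn ℝ h (interior v) :=
        hvc'.differentiableOn (by norm_num)
      have hd2 : ContDiffOn ℝ 1 (deriv h) (interior v) := by
        have hvc2 : ContDiffOn ℝ (1+1) h (interior v) :=
          (show ((2:ℕ):WithTop ℕ∞) = 1+1 by norm_num) ▸ hvc'
        exact ((contDiffOn_succ_iff_deriv_of_isOpen isOpen_interior).1 hvc2).2.2
      have hd3 : DifferentiableOn ℝ (deriv h) (interior v) :=
        hd2.differentiableOn (by norm_num)
      constructor
      · exact ((hd1.differentiableAt (isOpen_interior.mem_nhds hwint)).hasDerivAt)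
      · exact ((hd3.differentiableAt (isOpen_interior.mem_nhds hwint)).hasDerivAt)
    have key : ∀ (σ : ℝ), σ = 1 ∨ σ = -1 → ∀ w : ℝ, 0 < w →
        σ * (h w - Gf s a w) ≤ 0 := by
      intro σ hσ
      apply max_principle hs
        (fun w => σ * (h w - Gf s a w))
        (fun w => σ * (deriv h w - Gf1 s a w))
        (fun w => σ * (deriv (deriv h) w - Gf2 s a w))
      · intro w hw
        exact (((hfacts w hw).1.sub (hasDerivAt_Gf ha1 hw)).const_mul σ)
      · intro w hw
        exact (((hfacts w hw).2.sub (hasDerivAt_Gf1 ha1 hw)).const_mul σ)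
      · intro w hw
        have h1 := hODE w hw
        have h2 := ode_Gf ha1 haa hw
        rcases hσ with rfl | rfl <;> [skip; skip] <;>
          · ring_nf
            ring_nf at h1 h2
            linarith [h1, h2]
      · have := (h0.sub (Gf_tendsto_zero (s := s) ha1)).const_mul σ
        simpa using this
      · have := (hinf.sub hGinf).const_mul σ
        simpa using this
    have k1 := key 1 (Or.inl rfl) z hz
    have k2 := key (-1) (Or.inr rfl) z hz
    rw [hg_eq z]
    nlinarith [k1, k2]
end
end
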